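/- Let k be a commutative ring, A a k-algebra, (F^λ)_{λ∈Λ} a finite family of pairwise orthogonal idempotents summing to 1, and ⪯ a partial order on Λ such that F^λ A F^μ ≠ 0 implies λ ⪯ μ. Then for any λ ∈ Λ, any product F^λ a_1 a_2 ⋯ a_n F^λ with a_i ∈ A equals the sum over chains λ = λ_0 ⪯ λ_1 ⪯ ⋯ ⪯ λ_n = λ of F^{λ_0} a_1 F^{λ_1} a_2 ⋯ F^{λ_{n-1}} a_n F^{λ_n}, and since λ_0 = λ_n = λ forces all λ_i = λ, one gets F^λ a_1 ⋯ a_n F^λ = (F^λ a_1 F^λ)(F^λ a_2 F^λ)⋯(F^λ a_n F^λ). -/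
import Mathlib


/-- Let A be a k-algebra, (F^λ) a finite complete family of pairwise orthogonal
idempotents, and ⪯ a partial order on the index set such that F^λ A F^μ ≠ 0 implies
λ ⪯ μ. Then for any λ and any nonempty list a_1, …, a_n of elements of A,
F^λ a_1 ⋯ a_n F^λ = (F^λ a_1 F^λ)(F^λ a_2 F^λ)⋯(F^λ a_n F^λ). -/
theorem sandwich_prod_eq {k A : Type*} [CommRing k] [Ring A] [Algebra k A]
    {Λ : Type*} [Fintype Λ] [PartialOrder Λ] (F : Λ → A)
    (hidem : ∀ l, F l * F l = F l)
    (horth : ∀ l m, l ≠ m → F l * F m = 0)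
    (hsum : ∑ l, F l = 1)
    (hdown : ∀ l m : Λ, (∃ a : A, F l * a * F m ≠ 0) → l ≤ m)
    (l : Λ) (as : List A) (h : as ≠ []) :
    F l * as.prod * F l = (as.map (fun a => F l * a * F l)).prod := by
  induction as with
  | nil => exact absurd rfl h
  | cons a rest ih =>
    rcases eq_or_ne rest [] with rfl | hr
    · simp
    · have key : F l * (a * rest.prod) * F l
          = (F l * a * F l) * (F l * rest.prod * F l) := by
        have expand : F l * (a * rest.prod) * F l
            = ∑ m, (F l * a * F m) * (F m * rest.prod * F l) := by
          calc F l * (a * rest.prod) * F l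
              = (F l * a) * ((∑ m, F m) * (rest.prod * F l)) := by
                rw [hsum]; noncomm_ring
            _ = ∑ m, (F l * a) * (F m * (rest.prod * F l)) := by
                rw [Finset.sum_mul, Finset.mul_sum]
            _ = ∑ m, (F l * a * F m) * (F m * rest.prod * F l) := by
                refine Finset.sum_congr rfl fun m _ => ?_
                conv_lhs => rw [← hidem m]
                simp only [mul_assoc]
        rw [expand]
        rw [Finset.sum_eq_single l]
        · intro m _ hm
          by_contra hne
          have h1 : F l * a * F m ≠ 0 := fun h0 => hne (by rw [h0, zero_mul])
          have h2 : F m * rest.prod * F l ≠ 0 := fun h0 => hne (by rw [h0, mul_zero])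
          exact hm (le_antisymm (hdown m l ⟨rest.prod, h2⟩) (hdown l m ⟨a, h1⟩))
        · intro hl; exact absurd (Finset.mem_univ l) hl
      rw [List.prod_cons, List.map_cons, List.prod_cons, key, ih hr]
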